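/- Let ℓ be a prime, r ≥ 1, and Π a closed subgroup of GL_r(ℤ_ℓ). For every n ≥ 1 and every U ∈ 𝒞_{n+1}(Π), the product U·Φ(Π(n-1)) is a subgroup of Π and belongs to 𝒞_n(Π); that is, the map ψ_n : 𝒞_{n+1}(Π) → 𝒞_n(Π), U ↦ U·Φ(Π(n-1)), is well defined. -/

import Mathlib

open Matrix

/-- Reduction modulo `ℓ ^ n` on `GL_r(ℤ_ℓ)`. -/
noncomputable def glRed (l : ℕ) [Fact (Nat.Prime l)] (r n : ℕ) :
    GL (Fin r) ℤ_[l] →* GL (Fin r) (ZMod (l ^ n)) :=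
  Matrix.GeneralLinearGroup.map (PadicInt.toZModPow n)

/-- `Π(n)`: the kernel of reduction modulo `ℓ ^ n` restricted to the closed subgroup `Π`,
viewed as a subgroup of `Π`. -/
noncomputable def levelSubgroup (l : ℕ) [Fact (Nat.Prime l)] (r : ℕ)
    (P : Subgroup (GL (Fin r) ℤ_[l])) (n : ℕ) : Subgroup ↥P :=
  ((glRed l r n).comp P.subtype).ker

/-- A maximal proper open subgroup of a topological group. -/
def IsMaximalOpenSubgroup {G : Type*} [Group G] [TopologicalSpace G] (U : Subgroup G) : Prop :=
  IsOpen (U : Set G) ∧ U ≠ ⊤ ∧ ∀ V : Subgroup G, IsOpen (V : Set G) → U < V → V = ⊤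

/-- The Frattini subgroup of a topological group: the intersection of all maximal proper
open subgroups. -/
def frattiniOpen (G : Type*) [Group G] [TopologicalSpace G] : Subgroup G :=
  sInf {U : Subgroup G | IsMaximalOpenSubgroup U}

/-- The Frattini subgroup of a subgroup `K`, viewed as a subgroup of the ambient group. -/
def frattiniOf {G : Type*} [Group G] [TopologicalSpace G] (K : Subgroup G) : Subgroup G :=
  (frattiniOpen ↥K).map K.subtype

/-- `𝒞_n(Π)`: the set of open subgroups `U ⊆ Π` with `Φ(Π(n-1)) ≤ U` but `Π(n-1) ⊄ U`. -/
noncomputable def Cn (l : ℕ) [Fact (Nat.Prime l)] (r : ℕ)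
    (P : Subgroup (GL (Fin r) ℤ_[l])) (n : ℕ) : Set (Subgroup ↥P) :=
  {U | IsOpen (U : Set ↥P) ∧ frattiniOf (levelSubgroup l r P (n - 1)) ≤ U ∧
    ¬ levelSubgroup l r P (n - 1) ≤ U}

/-! ### Auxiliary lemmas -/

section Aux

variable {G : Type*} [Group G] [TopologicalSpace G]

theorem isMaximalOpen_comap (f g : G →* G) (hf : Continuous f) (hg : Continuous g)
    (hgf : g.comp f = MonoidHom.id G) (hfg : f.comp g = MonoidHom.id G)
    {M : Subgroup G} (hM : IsMaximalOpenSubgroup M) :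
    IsMaximalOpenSubgroup (M.comap f) := by
  obtain ⟨hopen, hne, hmax⟩ := hM
  refine ⟨by rw [Subgroup.coe_comap]; exact hopen.preimage hf, ?_, ?_⟩
  · intro htop
    apply hne
    ext x
    simp only [Subgroup.mem_top, iff_true]
    have hx : g x ∈ M.comap f := htop ▸ Subgroup.mem_top (g x)
    have hx2 : f (g x) ∈ M := hx
    rwa [← MonoidHom.comp_apply, hfg, MonoidHom.id_apply] at hx2
  · intro V hV hlt
    have key : (M.comap f).comap g = M := by
      rw [Subgroup.comap_comap, hfg, Subgroup.comap_id]
    have key2 : (V.comap g).comap f = V := by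
      rw [Subgroup.comap_comap, hgf, Subgroup.comap_id]
    have hlt' : M < V.comap g := by
      refine lt_of_le_of_ne ?_ ?_
      · rw [← key]; exact Subgroup.comap_mono hlt.le
      · intro h
        apply hlt.ne
        rw [h, key2]
    have : V.comap g = ⊤ := hmax _ (by rw [Subgroup.coe_comap]; exact hV.preimage hg) hlt'
    rw [← key2, this, Subgroup.comap_top]

theorem mem_frattiniOpen_map (f g : G →* G) (hf : Continuous f) (hg : Continuous g)
    (hgf : g.comp f = MonoidHom.id G) (hfg : f.comp g = MonoidHom.id G)
    {y : G} (hy : y ∈ frattiniOpen G) : f y ∈ frattiniOpen G := by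
  rw [frattiniOpen, Subgroup.mem_sInf] at hy ⊢
  intro M hM
  exact hy _ (isMaximalOpen_comap f g hf hg hgf hfg hM)

omit [TopologicalSpace G] in
theorem finite_supergroups (H : Subgroup G) [Finite (G ⧸ H)] :
    {K : Subgroup G | H ≤ K}.Finite := by
  have hle : ∀ K1 K2 : Subgroup G, H ≤ K2 →
      (QuotientGroup.mk '' (K1 : Set G) : Set (G ⧸ H)) = QuotientGroup.mk '' (K2 : Set G) →
      K1 ≤ K2 := by
    intro K1 K2 h2 heq x hx
    have : (QuotientGroup.mk x : G ⧸ H) ∈ QuotientGroup.mk '' (K2 : Set G) := by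
      rw [← heq]; exact ⟨x, hx, rfl⟩
    obtain ⟨y, hy, hxy⟩ := this
    have hmem : y⁻¹ * x ∈ H := QuotientGroup.eq.mp hxy
    have hx' : x = y * (y⁻¹ * x) := by group
    rw [hx']
    exact K2.mul_mem hy (h2 hmem)
  apply Set.Finite.of_finite_image (f := fun K : Subgroup G =>
    (QuotientGroup.mk '' (K : Set G) : Set (G ⧸ H)))
  · exact Set.toFinite _
  · intro K1 h1 K2 h2 heq
    exact le_antisymm (hle K1 K2 h2 heq) (hle K2 K1 h1 heq.symm)

theorem frattiniOpen_nongenerating [IsTopologicalGroup G] [CompactSpace G]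
    (H : Subgroup G) (hH : IsOpen (H : Set G))
    (h : H ⊔ frattiniOpen G = ⊤) : H = ⊤ := by
  by_contra hne
  have hfin : Finite (G ⧸ H) := H.quotient_finite_of_isOpen hH
  have hSfin : {K : Subgroup G | H ≤ K ∧ K ≠ ⊤}.Finite :=
    (finite_supergroups H).subset (fun K hK => hK.1)
  obtain ⟨M, hMmem, hMmax⟩ :=
    Set.Finite.exists_maximalFor id _ hSfin ⟨H, le_refl H, hne⟩
  have hMopen : IsOpen (M : Set G) := Subgroup.isOpen_mono hMmem.1 hH
  have hMO : IsMaximalOpenSubgroup M := by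
    refine ⟨hMopen, hMmem.2, ?_⟩
    intro V hV hlt
    by_contra hVne
    exact (lt_irrefl M) (lt_of_lt_of_le hlt (hMmax (j := V) ⟨le_trans hMmem.1 hlt.le, hVne⟩ hlt.le))
  have h1 : frattiniOpen G ≤ M := sInf_le hMO
  have h2 : (⊤ : Subgroup G) ≤ M := h ▸ sup_le hMmem.1 h1
  exact hMmem.2 (top_le_iff.mp h2)

variable [IsTopologicalGroup G]

/-- Conjugation by `g` restricted to a normal subgroup `K`. -/
def conjK (K : Subgroup G) [K.Normal] (g : G) : ↥K →* ↥K where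
  toFun y := ⟨g * ↑y * g⁻¹, Subgroup.Normal.conj_mem ‹K.Normal› _ y.2 g⟩
  map_one' := by ext; simp
  map_mul' a b := by ext; simp

theorem conjK_continuous (K : Subgroup G) [K.Normal] (g : G) : Continuous (conjK K g) := by
  apply Continuous.subtype_mk
  exact (continuous_const.mul continuous_subtype_val).mul continuous_const

theorem conjK_comp (K : Subgroup G) [K.Normal] (g : G) :
    (conjK K g⁻¹).comp (conjK K g) = MonoidHom.id ↥K := by
  ext y
  simp [conjK]
  group

theorem frattiniOf_normal (K : Subgroup G) [K.Normal] : (frattiniOf K).Normal := by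
  constructor
  intro x hx g
  rw [frattiniOf, Subgroup.mem_map] at hx ⊢
  obtain ⟨y, hy, rfl⟩ := hx
  refine ⟨conjK K g y, ?_, rfl⟩
  have h2 : (conjK K g).comp (conjK K g⁻¹) = MonoidHom.id ↥K := by
    have := conjK_comp K g⁻¹
    rwa [inv_inv] at this
  exact mem_frattiniOpen_map (conjK K g) (conjK K g⁻¹)
    (conjK_continuous K g) (conjK_continuous K g⁻¹) (conjK_comp K g) h2 hy

end Aux

theorem units_compactSpace {M : Type*} [Monoid M] [TopologicalSpace M] [CompactSpace M]
    [T1Space M] [ContinuousMul M] : CompactSpace Mˣ := by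
  have hrange : Set.range (Units.embedProduct M) =
      {p : M × Mᵐᵒᵖ | p.1 * p.2.unop = 1 ∧ p.2.unop * p.1 = 1} := by
    ext p
    constructor
    · rintro ⟨u, rfl⟩
      exact ⟨u.mul_inv, u.inv_mul⟩
    · rintro ⟨h1, h2⟩
      refine ⟨⟨p.1, p.2.unop, h1, h2⟩, ?_⟩
      simp [Units.embedProduct]
  have hcl : IsClosed (Set.range (Units.embedProduct M)) := by
    rw [hrange]
    have c1 : Continuous fun p : M × Mᵐᵒᵖ => p.1 * p.2.unop :=
      continuous_fst.mul (MulOpposite.continuous_unop.comp continuous_snd)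
    have c2 : Continuous fun p : M × Mᵐᵒᵖ => p.2.unop * p.1 :=
      (MulOpposite.continuous_unop.comp continuous_snd).mul continuous_fst
    exact ((isClosed_singleton (x := (1:M))).preimage c1).inter
      ((isClosed_singleton (x := (1:M))).preimage c2)
  haveI : CompactSpace Mᵐᵒᵖ := MulOpposite.opHomeomorph.compactSpace
  constructor
  rw [Units.isEmbedding_embedProduct.isCompact_iff, Set.image_univ]
  exact hcl.isCompact

instance glCompact (l : ℕ) [Fact (Nat.Prime l)] (r : ℕ) :
    CompactSpace (GL (Fin r) ℤ_[l]) := by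
  haveI : CompactSpace (Matrix (Fin r) (Fin r) ℤ_[l]) :=
    inferInstanceAs (CompactSpace (Fin r → Fin r → ℤ_[l]))
  haveI : T1Space (Matrix (Fin r) (Fin r) ℤ_[l]) :=
    inferInstanceAs (T1Space (Fin r → Fin r → ℤ_[l]))
  exact units_compactSpace

instance levelSubgroup_normal (l : ℕ) [Fact (Nat.Prime l)] (r : ℕ)
    (P : Subgroup (GL (Fin r) ℤ_[l])) (m : ℕ) : (levelSubgroup l r P m).Normal := by
  unfold levelSubgroup; infer_instance

theorem glRed_eq_one_iff (l : ℕ) [Fact (Nat.Prime l)] (r m : ℕ) (x : GL (Fin r) ℤ_[l]) :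
    glRed l r m x = 1 ↔ ∀ i j,
      ‖(x : Matrix (Fin r) (Fin r) ℤ_[l]) i j - (1 : Matrix (Fin r) (Fin r) ℤ_[l]) i j‖
        ≤ (l : ℝ) ^ (-(m:ℤ)) := by
  rw [Units.ext_iff]
  have h1 : ((glRed l r m x : GL (Fin r) (ZMod (l^m))) : Matrix (Fin r) (Fin r) (ZMod (l^m)))
      = ((x : Matrix (Fin r) (Fin r) ℤ_[l])).map (PadicInt.toZModPow m) := rfl
  rw [h1]
  rw [show ((1 : GL (Fin r) (ZMod (l^m))) : Matrix (Fin r) (Fin r) (ZMod (l^m))) = 1 from rfl]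
  rw [← Matrix.ext_iff]
  apply forall_congr'; intro i
  apply forall_congr'; intro j
  rw [Matrix.map_apply]
  rw [PadicInt.norm_le_pow_iff_mem_span_pow, ← PadicInt.ker_toZModPow, RingHom.mem_ker,
    map_sub, sub_eq_zero]
  constructor
  · intro h
    rw [h]
    by_cases hij : i = j <;> simp [Matrix.one_apply, hij]
  · intro h
    rw [h]
    by_cases hij : i = j <;> simp [Matrix.one_apply, hij]

theorem levelSubgroup_isClosed (l : ℕ) [Fact (Nat.Prime l)] (r : ℕ)
    (P : Subgroup (GL (Fin r) ℤ_[l])) (m : ℕ) :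
    IsClosed ((levelSubgroup l r P m : Set ↥P)) := by
  have key : (levelSubgroup l r P m : Set ↥P) =
      (fun x : ↥P => (x : GL (Fin r) ℤ_[l])) ⁻¹'
        (⋂ i, ⋂ j, {x : GL (Fin r) ℤ_[l] |
          ‖(x : Matrix (Fin r) (Fin r) ℤ_[l]) i j - (1 : Matrix (Fin r) (Fin r) ℤ_[l]) i j‖
            ≤ (l : ℝ) ^ (-(m:ℤ))}) := by
    ext x
    simp only [Set.mem_preimage, Set.mem_iInter, Set.mem_setOf_eq, SetLike.mem_coe]
    rw [levelSubgroup, MonoidHom.mem_ker, MonoidHom.comp_apply]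
    exact glRed_eq_one_iff l r m _
  rw [key]
  apply IsClosed.preimage continuous_subtype_val
  apply isClosed_iInter; intro i
  apply isClosed_iInter; intro j
  have hc : Continuous fun x : GL (Fin r) ℤ_[l] =>
      ‖(x : Matrix (Fin r) (Fin r) ℤ_[l]) i j - (1 : Matrix (Fin r) (Fin r) ℤ_[l]) i j‖ := by
    apply Continuous.norm
    apply Continuous.sub _ continuous_const
    exact Continuous.matrix_elem Units.continuous_val i j
  exact isClosed_le hc continuous_const

theorem levelSubgroup_mono (l : ℕ) [Fact (Nat.Prime l)] (r : ℕ)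
    (P : Subgroup (GL (Fin r) ℤ_[l])) {m n : ℕ} (h : m ≤ n) :
    levelSubgroup l r P n ≤ levelSubgroup l r P m := by
  intro x hx
  rw [levelSubgroup, MonoidHom.mem_ker, MonoidHom.comp_apply] at hx ⊢
  have hcomp : glRed l r m = (Matrix.GeneralLinearGroup.map
      (ZMod.castHom (pow_dvd_pow l h) (ZMod (l ^ m)))).comp (glRed l r n) := by
    rw [glRed, glRed, ← Matrix.GeneralLinearGroup.map_comp,
      PadicInt.zmod_cast_comp_toZModPow m n h]
  rw [hcomp, MonoidHom.comp_apply, hx, _root_.map_one]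

open Pointwise in
/-- The map `ψ_n : 𝒞_{n+1}(Π) → 𝒞_n(Π)`, `U ↦ U·Φ(Π(n-1))`, is well defined: for every
`U ∈ 𝒞_{n+1}(Π)` the product `U·Φ(Π(n-1))` is a subgroup of `Π` belonging to `𝒞_n(Π)`. -/
theorem psi_well_defined (l : ℕ) [Fact (Nat.Prime l)] (r : ℕ)
    (P : Subgroup (GL (Fin r) ℤ_[l])) (hP : IsClosed (P : Set (GL (Fin r) ℤ_[l])))
    (n : ℕ) (hn : 1 ≤ n) (U : Subgroup ↥P) (hU : U ∈ Cn l r P (n + 1)) :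
    ∃ W : Subgroup ↥P,
      (W : Set ↥P) = (U : Set ↥P) * (frattiniOf (levelSubgroup l r P (n - 1)) : Set ↥P) ∧
      W ∈ Cn l r P n := by
  obtain ⟨hUopen, hUfr, hUnle⟩ := hU
  simp only [Nat.add_sub_cancel] at hUfr hUnle
  haveI hFn : (frattiniOf (levelSubgroup l r P (n - 1))).Normal :=
    frattiniOf_normal (levelSubgroup l r P (n - 1))
  refine ⟨U ⊔ frattiniOf (levelSubgroup l r P (n - 1)), ?_, ?_, ?_, ?_⟩
  · exact Subgroup.mul_normal U (frattiniOf (levelSubgroup l r P (n - 1)))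
  · exact Subgroup.isOpen_mono le_sup_left hUopen
  · exact le_sup_right
  · intro hle
    apply hUnle
    haveI : CompactSpace ↥P := isCompact_iff_compactSpace.mp hP.isCompact
    haveI : CompactSpace ↥(levelSubgroup l r P (n - 1)) :=
      isCompact_iff_compactSpace.mp (levelSubgroup_isClosed l r P (n - 1)).isCompact
    have hKU : levelSubgroup l r P (n - 1) ≤ U := by
      have h1 : U.subgroupOf (levelSubgroup l r P (n - 1)) ⊔
          frattiniOpen ↥(levelSubgroup l r P (n - 1)) = ⊤ := by
        rw [eq_top_iff]
        rintro ⟨z, hzK⟩ -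
        have hz : z ∈ (U : Set ↥P) * (frattiniOf (levelSubgroup l r P (n - 1)) : Set ↥P) := by
          rw [← Subgroup.mul_normal]
          exact hle hzK
        obtain ⟨u, hu, f, hf, huf⟩ := hz
        have hu' : u ∈ U := hu
        have hf' : f ∈ frattiniOf (levelSubgroup l r P (n - 1)) := hf
        have hfK : f ∈ levelSubgroup l r P (n - 1) := by
          have hsub : frattiniOf (levelSubgroup l r P (n - 1)) ≤ levelSubgroup l r P (n - 1) := by
            rw [frattiniOf]
            exact Subgroup.map_subtype_le _
          exact hsub hf'
        have huK : u ∈ levelSubgroup l r P (n - 1) := by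
          have heq : u = z * f⁻¹ := by rw [← huf]; group
          rw [heq]
          exact Subgroup.mul_mem _ hzK (Subgroup.inv_mem _ hfK)
        have hmem1 : (⟨u, huK⟩ : ↥(levelSubgroup l r P (n - 1))) ∈
            U.subgroupOf (levelSubgroup l r P (n - 1)) := Subgroup.mem_subgroupOf.mpr hu'
        have hmem2 : (⟨f, hfK⟩ : ↥(levelSubgroup l r P (n - 1))) ∈
            frattiniOpen ↥(levelSubgroup l r P (n - 1)) := by
          rw [frattiniOf, Subgroup.mem_map] at hf'
          obtain ⟨y, hy, hyf⟩ := hf'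
          have hyy : y = (⟨f, hfK⟩ : ↥(levelSubgroup l r P (n - 1))) := Subtype.ext hyf
          rwa [← hyy]
        have hzuf : (⟨z, hzK⟩ : ↥(levelSubgroup l r P (n - 1))) = ⟨u, huK⟩ * ⟨f, hfK⟩ :=
          Subtype.ext huf.symm
        rw [hzuf]
        refine Subgroup.mul_mem _ ?_ ?_
        · exact (le_sup_left (α := Subgroup ↥(levelSubgroup l r P (n - 1)))
            (a := U.subgroupOf (levelSubgroup l r P (n - 1)))
            (b := frattiniOpen ↥(levelSubgroup l r P (n - 1)))) hmem1
        · exact (le_sup_right (α := Subgroup ↥(levelSubgroup l r P (n - 1)))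
            (a := U.subgroupOf (levelSubgroup l r P (n - 1)))
            (b := frattiniOpen ↥(levelSubgroup l r P (n - 1)))) hmem2
      have hopen : IsOpen ((U.subgroupOf (levelSubgroup l r P (n - 1)) :
          Set ↥(levelSubgroup l r P (n - 1)))) := by
        rw [Subgroup.subgroupOf, Subgroup.coe_comap]
        exact hUopen.preimage continuous_subtype_val
      have h2 : U.subgroupOf (levelSubgroup l r P (n - 1)) = ⊤ :=
        frattiniOpen_nongenerating _ hopen h1
      exact Subgroup.subgroupOf_eq_top.mp h2
    exact le_trans (levelSubgroup_mono l r P (Nat.sub_le n 1)) hKU
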